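/- arXiv:1503.04610 — 5 statements merged into one kernel-verified Lean document; each statement's English description precedes it below -/
import Mathlib

section
/- For any partial function f : List Bool →. List Bool, the partial function f^C whose domain is {code(x) ++ 11 ++ v : x ∈ Dom(f), v a word} and which is defined by f^C(code(x) ++ 11 ++ v) = code(f(x)) ++ 11 ++ v is well defined (the decomposition of an element of its domain as code(x) ++ 11 ++ v with x ∈ Dom(f) and v a word is unique) and is a right-ideal morphism. -/
def code (x : List Bool) : List Bool := x.flatMap (fun b => [false, b])

def IsRIMorphism (h : List Bool →. List Bool) : Prop :=
  ∀ x ∈ h.Dom, ∀ w : List Bool, h (x ++ w) = (h x).map (· ++ w)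

lemma code_cons (b : Bool) (x : List Bool) : code (b :: x) = false :: b :: code x := by
  simp [code]

lemma code_unique : ∀ x₁ x₂ v₁ v₂ : List Bool,
    code x₁ ++ [true, true] ++ v₁ = code x₂ ++ [true, true] ++ v₂ →
    x₁ = x₂ ∧ v₁ = v₂ := by
  intro x₁
  induction x₁ with
  | nil =>
    intro x₂ v₁ v₂ h
    cases x₂ with
    | nil => simpa [code] using h
    | cons b t => simp [code, code_cons] at h
  | cons a s ih =>
    intro x₂ v₁ v₂ h
    cases x₂ with
    | nil => simp [code, code_cons] at h
    | cons b t =>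
      rw [code_cons, code_cons] at h
      simp only [List.cons_append, List.cons.injEq] at h
      obtain ⟨_, hab, hrest⟩ := h
      obtain ⟨h1, h2⟩ := ih t v₁ v₂ hrest
      exact ⟨by rw [hab, h1], h2⟩

private lemma map_congr_aux (f : List Bool →. List Bool) {a b c d : List Bool}
    (h1 : a = b) (h2 : c = d) :
    Part.map (fun z => code z ++ [true, true] ++ c) (f a) =
      Part.map (fun z => code z ++ [true, true] ++ d) (f b) := by
  subst h1; subst h2; rfl

private lemma map_congr_aux2 (f : List Bool →. List Bool) {a b c d w : List Bool}
    (h1 : a = b) (h2 : c = d ++ w) :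
    Part.map (fun z => code z ++ [true, true] ++ c) (f a) =
      Part.map (· ++ w) (Part.map (fun z => code z ++ [true, true] ++ d) (f b)) := by
  subst h1; subst h2
  rw [Part.map_map]
  congr 1
  funext z
  simp [Function.comp]

/-- The partial function `f^C` with domain `{code(x) ++ 11 ++ v : x ∈ Dom f, v ∈ A*}`
and `f^C (code(x) ++ 11 ++ v) = code (f x) ++ 11 ++ v` is well defined (the
decomposition of an element of its domain is unique) and is a right-ideal morphism. -/
theorem fC_wellDefined_and_rim (f : List Bool →. List Bool) :
    (∀ x₁ x₂ v₁ v₂ : List Bool, x₁ ∈ f.Dom → x₂ ∈ f.Dom →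
        code x₁ ++ [true, true] ++ v₁ = code x₂ ++ [true, true] ++ v₂ →
        x₁ = x₂ ∧ v₁ = v₂) ∧
    ∃ F : List Bool →. List Bool,
      F.Dom = {y | ∃ x ∈ f.Dom, ∃ v : List Bool, y = code x ++ [true, true] ++ v} ∧
      (∀ x ∈ f.Dom, ∀ v : List Bool,
          F (code x ++ [true, true] ++ v) =
            (f x).map (fun y => code y ++ [true, true] ++ v)) ∧
      IsRIMorphism F := by
  classical
  refine ⟨fun x₁ x₂ v₁ v₂ _ _ h => code_unique x₁ x₂ v₁ v₂ h, ?_⟩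
  set P : List Bool → Prop := fun y => ∃ x, x ∈ f.Dom ∧ ∃ v, y = code x ++ [true, true] ++ v
    with hP
  refine ⟨fun y => Part.assert (P y)
    (fun h => (f h.choose).map (fun z => code z ++ [true, true] ++ h.choose_spec.2.choose)),
    ?_, ?_, ?_⟩
  · ext y
    constructor
    · intro hy
      obtain ⟨z, hz⟩ := Part.dom_iff_mem.mp hy
      obtain ⟨h, -⟩ := Part.mem_assert_iff.mp hz
      exact ⟨h.choose, h.choose_spec.1, h.choose_spec.2⟩
    · rintro ⟨x, hx, v, rfl⟩
      have h : P (code x ++ [true, true] ++ v) := ⟨x, hx, v, rfl⟩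
      obtain ⟨z, hz⟩ := Part.dom_iff_mem.mp (h.choose_spec.1 : (f h.choose).Dom)
      exact Part.dom_iff_mem.mpr ⟨_, Part.mem_assert_iff.mpr ⟨h, Part.mem_map _ hz⟩⟩
  · intro x hx v
    have h : P (code x ++ [true, true] ++ v) := ⟨x, hx, v, rfl⟩
    dsimp only
    rw [Part.assert_pos h]
    obtain ⟨e1, e2⟩ := code_unique _ _ _ _ h.choose_spec.2.choose_spec
    exact map_congr_aux f e1.symm e2.symm
  · intro y hy w
    obtain ⟨z, hz⟩ := Part.dom_iff_mem.mp hy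
    obtain ⟨h0, -⟩ := Part.mem_assert_iff.mp hz
    obtain ⟨x, hx, v, rfl⟩ := h0
    have h1 : P (code x ++ [true, true] ++ v) := ⟨x, hx, v, rfl⟩
    have h2 : P (code x ++ [true, true] ++ (v ++ w)) := ⟨x, hx, v ++ w, rfl⟩
    dsimp only
    rw [show code x ++ [true, true] ++ v ++ w = code x ++ [true, true] ++ (v ++ w) by simp,
      Part.assert_pos h1, Part.assert_pos h2]
    obtain ⟨e1, e2⟩ := code_unique _ _ _ _ h1.choose_spec.2.choose_spec
    obtain ⟨e3, e4⟩ := code_unique _ _ _ _ h2.choose_spec.2.choose_spec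
    exact map_congr_aux2 f (e3.symm.trans e1) (e4.symm.trans (congrArg (· ++ w) e2))
end

section
/- The transformation f ↦ f^C is an injective multiplicative embedding: for all partial functions f, g : List Bool →. List Bool one has (g ∘ f)^C = g^C ∘ f^C (composition of partial functions), and f^C = g^C implies f = g. -/
/-- The encoding `f ↦ f^C`: the partial function with domain
`{code(x) ++ 11 ++ v : x ∈ Dom f, v ∈ A*}` defined by
`f^C (code(x) ++ 11 ++ v) = code (f x) ++ 11 ++ v`. -/
noncomputable def fC (f : List Bool →. List Bool) : List Bool →. List Bool :=
  fun y =>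
    ⟨∃ x v : List Bool, x ∈ f.Dom ∧ y = code x ++ [true, true] ++ v,
     fun h =>
       code ((f h.choose).get h.choose_spec.choose_spec.1) ++ [true, true] ++
         h.choose_spec.choose⟩

lemma code_split_unique : ∀ {x x' v v' : List Bool},
    code x ++ [true, true] ++ v = code x' ++ [true, true] ++ v' → x = x' ∧ v = v' := by
  intro x
  induction x with
  | nil =>
    intro x' v v' h
    cases x' with
    | nil => simpa [code] using h
    | cons b xs => simp [code] at h
  | cons b xs ih =>
    intro x' v v' h
    cases x' with
    | nil => simp [code] at h
    | cons b' xs' =>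
      simp only [code, List.flatMap_cons, List.cons_append, List.append_assoc,
        List.cons.injEq] at h
      obtain ⟨-, hb, h⟩ := h
      have := ih (x' := xs') (v := v) (v' := v')
        (by simpa [code, List.append_assoc] using h)
      exact ⟨by rw [hb, this.1], this.2⟩

lemma code_injective : Function.Injective code := by
  intro x y h
  exact (code_split_unique (v := []) (v' := []) (by rw [h])).1

lemma mem_fC {f : List Bool →. List Bool} {y z : List Bool} :
    z ∈ fC f y ↔ ∃ x v w, w ∈ f x ∧ y = code x ++ [true, true] ++ v ∧
      z = code w ++ [true, true] ++ v := by
  constructor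
  · rintro ⟨h, rfl⟩
    exact ⟨h.choose, h.choose_spec.choose,
      (f h.choose).get h.choose_spec.choose_spec.1,
      Part.get_mem _, h.choose_spec.choose_spec.2, rfl⟩
  · rintro ⟨x, v, w, hw, rfl, rfl⟩
    have hdom : x ∈ f.Dom := Part.dom_iff_mem.mpr ⟨w, hw⟩
    have h : ∃ x' v' : List Bool, x' ∈ f.Dom ∧
        code x ++ [true, true] ++ v = code x' ++ [true, true] ++ v' :=
      ⟨x, v, hdom, rfl⟩
    refine ⟨h, ?_⟩
    obtain ⟨hx, hv⟩ := code_split_unique h.choose_spec.choose_spec.2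
    have hw' : w ∈ f h.choose := hx ▸ hw
    have hval : (f h.choose).get h.choose_spec.choose_spec.1 = w :=
      Part.mem_unique (Part.get_mem _) hw'
    show code ((f h.choose).get h.choose_spec.choose_spec.1) ++ [true, true] ++
        h.choose_spec.choose = _
    rw [hval, ← hv]

/-- The transformation `f ↦ f^C` is an injective multiplicative embedding:
`(g ∘ f)^C = g^C ∘ f^C` and `f^C = g^C → f = g`. -/
theorem fC_embedding :
    (∀ f g : List Bool →. List Bool, fC (g.comp f) = (fC g).comp (fC f)) ∧
    (∀ f g : List Bool →. List Bool, fC f = fC g → f = g) := by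
  constructor
  · intro f g
    funext y
    apply Part.ext
    intro z
    rw [mem_fC]
    simp only [PFun.comp_apply, Part.mem_bind_iff (g := fun a => g a), Part.mem_bind_iff (g := fun a => fC g a), mem_fC]
    constructor
    · rintro ⟨x, v, w, ⟨m, hm, hw⟩, rfl, rfl⟩
      exact ⟨code m ++ [true, true] ++ v, ⟨x, v, m, hm, rfl, rfl⟩,
        ⟨m, v, w, hw, rfl, rfl⟩⟩
    · rintro ⟨-, ⟨x, v, m, hm, rfl, rfl⟩, ⟨x', v', w, hw, he, rfl⟩⟩
      obtain ⟨rfl, rfl⟩ := code_split_unique he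
      exact ⟨x, v, w, ⟨m, hm, hw⟩, rfl, rfl⟩
  · intro f g h
    apply PFun.ext
    intro x w
    constructor
    · intro hw
      have : code w ++ [true, true] ++ [] ∈ fC g (code x ++ [true, true] ++ []) := by
        rw [← h, mem_fC]; exact ⟨x, [], w, hw, rfl, rfl⟩
      rw [mem_fC] at this
      obtain ⟨x', v', w', hw', he1, he2⟩ := this
      obtain ⟨hx1, -⟩ := code_split_unique he1
      obtain ⟨hx2, -⟩ := code_split_unique he2
      rw [hx1, hx2]; exact hw'
    · intro hw
      have : code w ++ [true, true] ++ [] ∈ fC f (code x ++ [true, true] ++ []) := by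
        rw [h, mem_fC]; exact ⟨x, [], w, hw, rfl, rfl⟩
      rw [mem_fC] at this
      obtain ⟨x', v', w', hw', he1, he2⟩ := this
      obtain ⟨hx1, -⟩ := code_split_unique he1
      obtain ⟨hx2, -⟩ := code_split_unique he2
      rw [hx1, hx2]; exact hw'
end

section
/- Balanced functions have balanced inverses: let f be a right-ideal morphism with balance bounded by q : ℕ → ℕ (for all x ∈ Dom(f), |f(x)| ≤ q(|x|) and |x| ≤ q(|f(x)|)), and let f₁' be any inverse of f, i.e., a partial function with f ∘ f₁' ∘ f = f. Then the restriction f' of f₁' to the set {y ∈ Dom(f₁') : |y| ≤ q(|f₁'(y)|) and |f₁'(y)| ≤ q(|y|)} is again an inverse of f (f ∘ f' ∘ f = f), and f' has balance bounded by q. -/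
/-- `g` has balance bounded by `q` : for all `x ∈ Dom g`,
`|g x| ≤ q |x|` and `|x| ≤ q |g x|`. -/
def HasBalance (q : ℕ → ℕ) (g : List Bool →. List Bool) : Prop :=
  ∀ x y : List Bool, y ∈ g x → y.length ≤ q x.length ∧ x.length ≤ q y.length

/-- The restriction of `g` to `{y ∈ Dom g : |y| ≤ q |g y| and |g y| ≤ q |y|}`. -/
def balRestrict (q : ℕ → ℕ) (g : List Bool →. List Bool) : List Bool →. List Bool :=
  fun y => Part.assert
    (∀ z ∈ g y, y.length ≤ q z.length ∧ z.length ≤ q y.length) (fun _ => g y)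

theorem pfun_mem_comp {α β γ : Type} (f : β →. γ) (g : α →. β) (c : γ) (a : α) :
    c ∈ f.comp g a ↔ ∃ b ∈ g a, c ∈ f b := Part.mem_bind_iff

/-- Balanced functions have balanced inverses: if `f` is a right-ideal morphism with
balance `≤ q` and `f₁'` satisfies `f ∘ f₁' ∘ f = f`, then the restriction `f'` of
`f₁'` to `{y ∈ Dom f₁' : |y| ≤ q |f₁' y| and |f₁' y| ≤ q |y|}` again satisfies
`f ∘ f' ∘ f = f` and has balance `≤ q`. -/
theorem balanced_inverse (q : ℕ → ℕ) (f f₁' : List Bool →. List Bool)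
    (hrim : IsRIMorphism f) (hbal : HasBalance q f)
    (hinv : f.comp (f₁'.comp f) = f) :
    f.comp ((balRestrict q f₁').comp f) = f ∧ HasBalance q (balRestrict q f₁') := by
  constructor
  · apply PFun.ext
    intro x z
    simp only [pfun_mem_comp]
    constructor
    · rintro ⟨w, ⟨y, hy, hw⟩, hz⟩
      simp only [balRestrict, Part.mem_assert_iff] at hw
      obtain ⟨_, hw⟩ := hw
      have : z ∈ (f.comp (f₁'.comp f)) x := by
        simp only [pfun_mem_comp]
        exact ⟨w, ⟨y, hy, hw⟩, hz⟩
      rwa [hinv] at this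
    · intro hz
      have hz' : z ∈ (f.comp (f₁'.comp f)) x := by rw [hinv]; exact hz
      simp only [pfun_mem_comp] at hz'
      obtain ⟨w, ⟨y, hy, hw⟩, hzw⟩ := hz'
      have hyz : y = z := Part.mem_unique hy hz
      subst hyz
      refine ⟨w, ⟨y, hy, ?_⟩, hzw⟩
      simp only [balRestrict, Part.mem_assert_iff]
      refine ⟨fun u hu => ?_, hw⟩
      have : u = w := Part.mem_unique hu hw
      subst this
      have := hbal u y hzw
      exact ⟨this.1, this.2⟩
  · intro x y hy
    simp only [balRestrict, Part.mem_assert_iff] at hy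
    obtain ⟨h, hy⟩ := hy
    exact (h y hy).symm
end

section
/- For every nonempty word a over {0,1}, the prefix code P_a = {code(aⁿ) ++ 0010 : n ≥ 1} has the following branching property: for every u ∈ P_a and every integer N > 0, there exist v ∈ P_a with |v| > N and words u₀, c, z such that v = u₀ ++ z, u = u₀ ++ c, and |c| ≤ 4. -/
/-- The prefix code `P_a = {code(aⁿ) ++ 0010 : n ≥ 1}`. -/
def Pa (a : List Bool) : Set (List Bool) :=
  {y | ∃ n : ℕ, 1 ≤ n ∧ y = code ((List.replicate n a).flatten) ++ [false, false, true, false]}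

lemma code_append (x y : List Bool) : code (x ++ y) = code x ++ code y := by
  simp [code]

lemma code_length (x : List Bool) : (code x).length = 2 * x.length := by
  induction x with
  | nil => simp [code]
  | cons b t ih => simp [code] at ih ⊢; omega

/-- Branching property of `P_a`: for every `u ∈ P_a` and every `N > 0` there are
`v ∈ P_a` with `|v| > N` and words `u₀, c, z` with `v = u₀ ++ z`, `u = u₀ ++ c`
and `|c| ≤ 4`. -/
theorem Pa_branching (a : List Bool) (ha : a ≠ []) :
    ∀ u ∈ Pa a, ∀ N : ℕ, 0 < N →
      ∃ v ∈ Pa a, N < v.length ∧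
        ∃ u₀ c z : List Bool, v = u₀ ++ z ∧ u = u₀ ++ c ∧ c.length ≤ 4 := by
  intro u hu N hN
  obtain ⟨n, hn, rfl⟩ := hu
  set m := n + N with hm
  refine ⟨code ((List.replicate m a).flatten) ++ [false, false, true, false],
    ⟨m, by omega, rfl⟩, ?_, code ((List.replicate n a).flatten),
    [false, false, true, false],
    code ((List.replicate N a).flatten) ++ [false, false, true, false], ?_, rfl, by simp⟩
  · have hlen : 1 ≤ a.length := List.length_pos_iff.mpr ha
    simp [code_length, List.length_flatten, List.map_replicate]
    have : m ≤ m * a.length := Nat.le_mul_of_pos_right _ (by omega)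
    omega
  · rw [hm, List.replicate_add, List.flatten_append, code_append, List.append_assoc]
end

section
/- Let s be the partial function with domain 0*1A* defined by s(0ⁿ ++ 1 ++ x) = 0^{2n²} ++ 1 ++ x for all n ≥ 0 and words x, and let g : ℕ → ℕ be g(k) = 2k². Then s is a right-ideal morphism; for every m ≥ 0, the m-fold composite sᵐ satisfies sᵐ(0ⁿ ++ 1 ++ x) = 0^{g^[m](n)} ++ 1 ++ x, where g^[m] is the m-fold iterate of g; and for all n ≥ 1 and m ≥ 0, g^[m](n) ≥ 2ᵐ · n^(2ᵐ). In particular the output length of sᵐ on input 0ⁿ1 is at least 2ᵐ · n^(2ᵐ), so the functions sᵐ have unbounded polynomial growth degree as m grows. -/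
/-- The function `s : 0ⁿ ++ 1 ++ x ↦ 0^(2n²) ++ 1 ++ x`, with domain `0*1A*`. -/
noncomputable def sfun : List Bool →. List Bool :=
  fun y =>
    ⟨∃ n : ℕ, ∃ x : List Bool, y = List.replicate n false ++ [true] ++ x,
     fun h =>
       List.replicate (2 * h.choose ^ 2) false ++ [true] ++ h.choose_spec.choose⟩

/-- `m`-fold composite of a partial function (composition of partial functions
iterated `m` times). -/
def pfunPow (f : List Bool →. List Bool) : ℕ → (List Bool →. List Bool)
  | 0 => PFun.id (List Bool)
  | m + 1 => f.comp (pfunPow f m)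

lemma decomp_uniq : ∀ (n n' : ℕ) (x x' : List Bool),
    List.replicate n false ++ [true] ++ x = List.replicate n' false ++ [true] ++ x' →
    n = n' ∧ x = x' := by
  intro n
  induction n with
  | zero =>
    intro n' x x' h
    cases n' with
    | zero => simpa using h
    | succ k => simp [List.replicate_succ] at h
  | succ k ih =>
    intro n' x x' h
    cases n' with
    | zero => simp [List.replicate_succ] at h
    | succ k' =>
      simp only [List.replicate_succ, List.cons_append, List.cons.injEq, true_and] at h
      obtain ⟨h1, h2⟩ := ih k' x x' h
      exact ⟨by omega, h2⟩

lemma sfun_eq (n : ℕ) (x : List Bool) :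
    sfun (List.replicate n false ++ [true] ++ x) =
      Part.some (List.replicate (2 * n ^ 2) false ++ [true] ++ x) := by
  have hdom : ∃ n' : ℕ, ∃ x' : List Bool,
      List.replicate n false ++ [true] ++ x = List.replicate n' false ++ [true] ++ x' :=
    ⟨n, x, rfl⟩
  rw [Part.eq_some_iff]
  refine ⟨hdom, ?_⟩
  obtain ⟨h1, h2⟩ := decomp_uniq _ _ _ _ hdom.choose_spec.choose_spec
  show List.replicate (2 * hdom.choose ^ 2) false ++ [true] ++ hdom.choose_spec.choose = _
  exact congrArg₂ (fun a b => List.replicate (2 * a ^ 2) false ++ [true] ++ b) h1.symm h2.symm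

lemma pow_eq (g : ℕ → ℕ) (hg : ∀ k : ℕ, g k = 2 * k ^ 2) :
    ∀ m n : ℕ, ∀ x : List Bool,
        pfunPow sfun m (List.replicate n false ++ [true] ++ x) =
          Part.some (List.replicate (g^[m] n) false ++ [true] ++ x) := by
  intro m
  induction m with
  | zero => intro n x; simp [pfunPow, PFun.id]
  | succ k ih =>
    intro n x
    show (sfun.comp (pfunPow sfun k)) _ = _
    rw [PFun.comp_apply, ih]
    refine (Part.bind_some _ (fun y => sfun y)).trans ?_
    show sfun _ = _
    rw [sfun_eq,
      Function.iterate_succ_apply', hg]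

lemma growth (g : ℕ → ℕ) (hg : ∀ k : ℕ, g k = 2 * k ^ 2) :
    ∀ n : ℕ, 1 ≤ n → ∀ m : ℕ, 2 ^ m * n ^ 2 ^ m ≤ g^[m] n := by
  intro n hn m
  induction m with
  | zero => simp
  | succ k ih =>
    rw [Function.iterate_succ_apply', hg]
    calc 2 ^ (k+1) * n ^ 2 ^ (k+1)
        ≤ 2 * (2 ^ k * n ^ 2 ^ k) ^ 2 := by
          ring_nf
          have h2 : 2 ^ k ≤ 2 ^ (k * 2) := Nat.pow_le_pow_right (by norm_num) (by omega)
          exact Nat.mul_le_mul_right 2 (Nat.mul_le_mul_left _ h2)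
      _ ≤ 2 * (g^[k] n) ^ 2 := by
          have := Nat.pow_le_pow_left ih 2
          omega

/-- `s` is a right-ideal morphism; the `m`-fold composite `sᵐ` maps
`0ⁿ ++ 1 ++ x` to `0^(g^[m] n) ++ 1 ++ x` where `g k = 2k²`; and for `n ≥ 1`,
`g^[m] n ≥ 2ᵐ · n^(2ᵐ)`, so in particular the output length of `sᵐ` on input
`0ⁿ1` is at least `2ᵐ · n^(2ᵐ)`. -/
theorem sfun_iterates (g : ℕ → ℕ) (hg : ∀ k : ℕ, g k = 2 * k ^ 2) :
    IsRIMorphism sfun ∧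
    (∀ m n : ℕ, ∀ x : List Bool,
        pfunPow sfun m (List.replicate n false ++ [true] ++ x) =
          Part.some (List.replicate (g^[m] n) false ++ [true] ++ x)) ∧
    (∀ n : ℕ, 1 ≤ n → ∀ m : ℕ, 2 ^ m * n ^ 2 ^ m ≤ g^[m] n) ∧
    (∀ n : ℕ, 1 ≤ n → ∀ m : ℕ, ∀ y : List Bool,
        y ∈ pfunPow sfun m (List.replicate n false ++ [true]) →
        2 ^ m * n ^ 2 ^ m ≤ y.length) := by
  refine ⟨?_, pow_eq g hg, growth g hg, ?_⟩
  · intro x hx w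
    obtain ⟨n, x0, rfl⟩ := hx
    have h1 : (List.replicate n false ++ [true] ++ x0) ++ w =
        List.replicate n false ++ [true] ++ (x0 ++ w) := by simp
    rw [h1, sfun_eq, sfun_eq, Part.map_some]
    simp
  · intro n hn m y hy
    have h0 : List.replicate n false ++ [true] =
        List.replicate n false ++ [true] ++ ([] : List Bool) := by simp
    rw [h0, pow_eq g hg] at hy
    rw [Part.mem_some_iff] at hy
    subst hy
    simp only [List.length_append, List.length_replicate, List.length_cons]
    have := growth g hg n hn m
    simp only [List.length_nil]
    omega
end
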